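/- Fix N ∈ ℕ, T > 0 and 0 < s < t < T. Then for every x ∈ ℝ^N_<, the transition probability density g_{N,T}(s, x; t, y) = f_N(t−s; x, y) 𝒩_N(T−t; y) / 𝒩_N(T−s; x) integrates to one over the Weyl chamber: ∫_{ℝ^N_<} g_{N,T}(s, x; t, y) dy = 1. -/

import Mathlib

open MeasureTheory

/-- The heat kernel `p_t(x,y) = (2πt)^{-1/2} exp(-(x-y)²/(2t))`. -/
noncomputable def heatKernel (t x y : ℝ) : ℝ :=
  (1 / Real.sqrt (2 * Real.pi * t)) * Real.exp (-(x - y)^2 / (2 * t))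

/-- The Weyl chamber `ℝ^N_< = {x : x_1 < x_2 < ⋯ < x_N}`. -/
def weylChamber (N : ℕ) : Set (Fin N → ℝ) := {x | StrictMono x}

/-- The Karlin–McGregor determinant `f_N(t; x, y) = det[p_t(x_i, y_j)]`. -/
noncomputable def fKM (N : ℕ) (t : ℝ) (x y : Fin N → ℝ) : ℝ :=
  Matrix.det (Matrix.of fun i j => heatKernel t (x i) (y j))

/-- The non-colliding probability `𝒩_N(t; x) = ∫_{ℝ^N_<} f_N(t; x, y) dy`. -/
noncomputable def NKM (N : ℕ) (t : ℝ) (x : Fin N → ℝ) : ℝ :=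
  ∫ y in weylChamber N, fKM N t x y

open Real Matrix

noncomputable def psign {N : ℕ} (σ : Equiv.Perm (Fin N)) : ℝ := ((Equiv.Perm.sign σ : ℤ) : ℝ)

-- Gaussian helpers
lemma integral_gauss_shift (a b : ℝ) (ha : 0 < a) :
    ∫ z : ℝ, Real.exp (-a * z ^ 2 + b * z) = Real.sqrt (π / a) * Real.exp (b ^ 2 / (4 * a)) := by
  have h : ∀ z : ℝ, Real.exp (-a * z ^ 2 + b * z)
      = Real.exp (-a * (z - b / (2 * a)) ^ 2) * Real.exp (b ^ 2 / (4 * a)) := by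
    intro z
    rw [← Real.exp_add]
    congr 1
    field_simp
    ring
  simp_rw [h]
  rw [integral_mul_const]
  congr 1
  rw [← integral_gaussian a]
  exact integral_sub_right_eq_self (fun z => Real.exp (-a * z ^ 2)) (b / (2 * a))

lemma integrable_gauss_shift (a b : ℝ) (ha : 0 < a) :
    Integrable (fun z : ℝ => Real.exp (-a * z ^ 2 + b * z)) := by
  have h : ∀ z : ℝ, Real.exp (-a * z ^ 2 + b * z)
      = Real.exp (-a * (z - b / (2 * a)) ^ 2) * Real.exp (b ^ 2 / (4 * a)) := by
    intro z
    rw [← Real.exp_add]; congr 1; field_simp; ring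
  simp_rw [h]
  exact ((integrable_exp_neg_mul_sq ha).comp_sub_right (b / (2 * a))).mul_const _

lemma heatKernel_pos {t : ℝ} (ht : 0 < t) (x y : ℝ) : 0 < heatKernel t x y := by
  unfold heatKernel
  positivity

lemma heatKernel_le {t : ℝ} (ht : 0 < t) (x y : ℝ) :
    heatKernel t x y ≤ 1 / Real.sqrt (2 * Real.pi * t) := by
  unfold heatKernel
  have h1 : Real.exp (-(x - y)^2 / (2 * t)) ≤ 1 := by
    rw [Real.exp_le_one_iff]
    apply div_nonpos_of_nonpos_of_nonneg
    · nlinarith [sq_nonneg (x - y)]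
    · positivity
  have h2 : (0:ℝ) < Real.sqrt (2 * Real.pi * t) := by
    positivity
  calc (1 / Real.sqrt (2 * Real.pi * t)) * Real.exp (-(x - y)^2 / (2 * t))
      ≤ (1 / Real.sqrt (2 * Real.pi * t)) * 1 := by
        apply mul_le_mul_of_nonneg_left h1; positivity
    _ = _ := mul_one _

lemma heatKernel_eq_gauss {t : ℝ} (ht : 0 < t) (x : ℝ) : ∀ y,
    heatKernel t x y = (1 / Real.sqrt (2 * Real.pi * t)) * Real.exp (-x^2/(2*t)) *
      Real.exp (-(1/(2*t)) * y ^ 2 + (x/t) * y) := by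
  intro y
  unfold heatKernel
  conv_rhs => rw [mul_assoc, ← Real.exp_add]
  congr 1
  field_simp
  ring

lemma integrable_heatKernel {t : ℝ} (ht : 0 < t) (x : ℝ) : Integrable (heatKernel t x) := by
  rw [show heatKernel t x = fun y => (1 / Real.sqrt (2 * Real.pi * t)) * Real.exp (-x^2/(2*t)) *
      Real.exp (-(1/(2*t)) * y ^ 2 + (x/t) * y) from funext (heatKernel_eq_gauss ht x)]
  exact (integrable_gauss_shift (1/(2*t)) (x/t) (by positivity)).const_mul _

lemma integral_heatKernel {t : ℝ} (ht : 0 < t) (x : ℝ) : ∫ y, heatKernel t x y = 1 := by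
  have h : ∀ y : ℝ, heatKernel t x y
      = (1 / Real.sqrt (2 * Real.pi * t)) * Real.exp (-(1/(2*t)) * (y - x) ^ 2) := by
    intro y
    unfold heatKernel
    congr 2
    field_simp
    ring
  simp_rw [h]
  rw [integral_const_mul, integral_sub_right_eq_self (fun y => Real.exp (-(1/(2*t)) * y ^ 2)) x,
    integral_gaussian]
  rw [one_div, inv_mul_eq_one₀ (by positivity)]
  congr 1
  field_simp

/-- Pointwise factorization of a product of two heat kernels. -/
lemma heatKernel_mul {a b : ℝ} (ha : 0 < a) (hb : 0 < b) (x y z : ℝ) :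
    heatKernel a x z * heatKernel b z y =
      heatKernel (a + b) x y * heatKernel (a * b / (a + b)) ((b * x + a * y)/(a + b)) z := by
  unfold heatKernel
  have hab : 0 < a + b := by linarith
  rw [mul_mul_mul_comm, ← Real.exp_add, mul_mul_mul_comm, ← Real.exp_add]
  congr 1
  · rw [div_mul_div_comm, div_mul_div_comm]
    congr 1
    rw [← Real.sqrt_mul (by positivity), ← Real.sqrt_mul (by positivity)]
    congr 1
    field_simp
  · congr 1
    field_simp
    ring

lemma heatKernel_chapman {a b : ℝ} (ha : 0 < a) (hb : 0 < b) (x y : ℝ) :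
    ∫ z, heatKernel a x z * heatKernel b z y = heatKernel (a + b) x y := by
  simp_rw [heatKernel_mul ha hb x y]
  rw [integral_const_mul, integral_heatKernel (by positivity), mul_one]

lemma integrable_heatKernel_mul {a b : ℝ} (ha : 0 < a) (hb : 0 < b) (x y : ℝ) :
    Integrable (fun z => heatKernel a x z * heatKernel b z y) := by
  simp_rw [heatKernel_mul ha hb x y]
  exact (integrable_heatKernel (by positivity) _).const_mul _

/-- A nonzero linear combination of `n` exponentials cannot vanish at `n` increasing points. -/
lemma exp_comb_zeros : ∀ (n : ℕ) (v : Fin n → ℝ), StrictMono v → ∀ (c : Fin n → ℝ)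
    (u : Fin n → ℝ), StrictMono u → (∀ i, ∑ j, c j * Real.exp (v j * u i) = 0) → c = 0 := by
  intro n
  induction n with
  | zero => intro v _ c u _ _; ext i; exact absurd i.2 (Nat.not_lt_zero _)
  | succ n ih =>
    intro v hv c u hu h
    -- g z = c 0 + ∑_{j : Fin n} c j.succ * exp ((v j.succ - v 0) * z)
    set g : ℝ → ℝ := fun z => c 0 + ∑ j : Fin n, c j.succ * Real.exp ((v j.succ - v 0) * z)
      with hg
    have hgu : ∀ i, g (u i) = 0 := by
      intro i
      have h0 := h i
      rw [Fin.sum_univ_succ] at h0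
      have e1 : c 0 = c 0 * Real.exp (v 0 * u i) * Real.exp (-(v 0 * u i)) := by
        rw [mul_assoc, ← Real.exp_add, add_neg_cancel, Real.exp_zero, mul_one]
      have e2 : ∀ j : Fin n, c j.succ * Real.exp ((v j.succ - v 0) * u i)
          = c j.succ * Real.exp (v j.succ * u i) * Real.exp (-(v 0 * u i)) := by
        intro j
        rw [mul_assoc, ← Real.exp_add]
        congr 2
        ring
      have key : g (u i) = (c 0 * Real.exp (v 0 * u i) +
          ∑ j : Fin n, c j.succ * Real.exp (v j.succ * u i)) * Real.exp (-(v 0 * u i)) := by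
        simp only [hg, add_mul, Finset.sum_mul]
        rw [← e1]
        exact congrArg (c 0 + ·) (Finset.sum_congr rfl fun j _ => e2 j)
      rw [key, h0, zero_mul]
    -- derivative
    set g' : ℝ → ℝ := fun z => ∑ j : Fin n, (c j.succ * (v j.succ - v 0)) *
      Real.exp ((v j.succ - v 0) * z) with hg'
    have hderiv : ∀ z : ℝ, HasDerivAt g (g' z) z := by
      intro z
      have hterm : ∀ (k cj : ℝ), HasDerivAt (fun z => cj * Real.exp (k * z))
          (cj * k * Real.exp (k * z)) z := by
        intro k cj
        have h1 : HasDerivAt (fun z : ℝ => k * z) k z := by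
          simpa using (hasDerivAt_id z).const_mul k
        have h2 := (h1.exp).const_mul cj
        rw [show cj * k * Real.exp (k * z) = cj * (Real.exp (k * z) * k) by ring]
        exact h2
      have h3 : HasDerivAt (fun z => c 0 + ∑ j : Fin n, c j.succ * Real.exp ((v j.succ - v 0) * z))
          (∑ j : Fin n, c j.succ * (v j.succ - v 0) * Real.exp ((v j.succ - v 0) * z)) z := by
        apply HasDerivAt.const_add
        exact HasDerivAt.fun_sum (fun j _ => hterm _ _)
      exact h3
    -- Rolle points
    have hroll : ∀ i : Fin n, ∃ z ∈ Set.Ioo (u i.castSucc) (u i.succ), g' z = 0 := by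
      intro i
      apply exists_hasDerivAt_eq_zero (hu (Fin.castSucc_lt_succ (i := i)))
        (fun z _ => (hderiv z).continuousAt.continuousWithinAt)
        (by rw [hgu, hgu])
      intro z _
      exact hderiv z
    choose w hw hw0 using hroll
    have hwmono : StrictMono w := by
      have key : ∀ i : Fin n, ∀ j : Fin n, i < j → w i < w j := by
        intro i j hij
        have h1 : w i < u i.succ := (hw i).2
        have h2 : u j.castSucc < w j := (hw j).1
        have h3 : u i.succ ≤ u j.castSucc := by
          apply hu.monotone
          rw [Fin.succ_le_castSucc_iff]
          exact hij
        linarith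
      exact fun i j => key i j
    have hsucc : (fun j : Fin n => c j.succ * (v j.succ - v 0)) = 0 := by
      apply ih (fun j => v j.succ - v 0)
        (fun i j hij => by have := hv (Fin.succ_lt_succ_iff.2 hij); simp; linarith)
        _ w hwmono
      intro i
      rw [← hw0 i, hg']
    have hcs : ∀ j : Fin n, c j.succ = 0 := by
      intro j
      have := congrFun hsucc j
      simp only [Pi.zero_apply] at this
      rcases mul_eq_zero.1 this with h' | h'
      · exact h'
      · exfalso
        have : v 0 < v j.succ := hv (Fin.succ_pos j)
        linarith [sub_eq_zero.1 h']
    have hc0 : c 0 = 0 := by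
      have := hgu 0
      rw [hg] at this
      simp only [hcs, zero_mul, Finset.sum_const_zero, add_zero] at this
      exact this
    ext i
    simp only [Pi.zero_apply]
    rcases Fin.eq_zero_or_eq_succ i with rfl | ⟨j, rfl⟩
    · exact hc0
    · exact hcs j

lemma det_exp_ne_zero {n : ℕ} (u v : Fin n → ℝ) (hu : StrictMono u) (hv : StrictMono v) :
    Matrix.det (Matrix.of fun i j => Real.exp (u i * v j)) ≠ 0 := by
  intro hdet
  obtain ⟨c, hc, hmv⟩ := (Matrix.exists_mulVec_eq_zero_iff (M := Matrix.of
    fun i j => Real.exp (u i * v j))).2 hdet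
  apply hc
  apply exp_comb_zeros n v hv c u hu
  intro i
  have := congrFun hmv i
  simpa [Matrix.mulVec, dotProduct, mul_comm] using this

lemma det_exp_diag_pos {n : ℕ} (w : Fin n → ℝ) (hw : StrictMono w) :
    0 < Matrix.det (Matrix.of fun i j => Real.exp (w i * w j)) := by
  apply Matrix.PosDef.det_pos
  apply Matrix.PosDef.of_dotProduct_mulVec_pos
  · ext i j
    simp [Matrix.conjTranspose_apply, mul_comm]
  · intro c hc
    set d : Fin n → ℝ := fun i => Real.exp (-(w i)^2/2) with hd
    set φ : Fin n → ℝ → ℝ := fun i z => Real.exp (w i * z - z^2/4) with hφ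
    set g : ℝ → ℝ := fun z => ∑ i, c i * d i * φ i z with hg
    have hφeq : ∀ i j : Fin n, (fun z => φ i z * φ j z)
        = fun z => Real.exp (-(1/2) * z^2 + (w i + w j) * z) := by
      intro i j
      funext z
      rw [hφ]
      rw [← Real.exp_add]
      congr 1
      ring
    have hφint : ∀ i j : Fin n, Integrable (fun z => φ i z * φ j z) := by
      intro i j
      rw [hφeq]
      exact integrable_gauss_shift _ _ (by norm_num)
    have hφval : ∀ i j : Fin n, ∫ z, φ i z * φ j z
        = Real.sqrt (2 * π) * Real.exp ((w i + w j)^2 / 2) := by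
      intro i j
      rw [hφeq, integral_gauss_shift _ _ (by norm_num)]
      rw [show π / (1/2 : ℝ) = 2 * π by ring]
      norm_num
      try ring
    have hgsq : (fun z => g z * g z) = fun z => ∑ i, ∑ j,
        (c i * d i * (c j * d j)) * (φ i z * φ j z) := by
      funext z
      rw [hg, Finset.sum_mul_sum]
      exact Finset.sum_congr rfl fun i _ => Finset.sum_congr rfl fun j _ => by ring
    have hgint : Integrable (fun z => g z * g z) := by
      rw [hgsq]
      exact integrable_finset_sum _ fun i _ => integrable_finset_sum _
        fun j _ => (hφint i j).const_mul _
    have hgval : ∫ z, g z * g z = ∑ i, ∑ j,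
        (c i * d i * (c j * d j)) * (Real.sqrt (2 * π) * Real.exp ((w i + w j)^2 / 2)) := by
      rw [hgsq, integral_finset_sum _ (fun i _ => integrable_finset_sum _
        (fun j _ => (hφint i j).const_mul _))]
      apply Finset.sum_congr rfl
      intro i _
      rw [integral_finset_sum _ (fun j _ => (hφint i j).const_mul _)]
      exact Finset.sum_congr rfl fun j _ => by rw [integral_const_mul, hφval]
    have hexp : ∀ i j : Fin n, d i * d j * Real.exp ((w i + w j)^2/2)
        = Real.exp (w i * w j) := by
      intro i j
      rw [hd, ← Real.exp_add, ← Real.exp_add]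
      congr 1
      ring
    have hQF : dotProduct (star c) ((Matrix.of fun i j => Real.exp (w i * w j)) *ᵥ c)
        = (1 / Real.sqrt (2 * π)) * ∫ z, g z * g z := by
      rw [hgval, Finset.mul_sum]
      simp only [dotProduct, Matrix.mulVec, star_trivial, Matrix.of_apply]
      apply Finset.sum_congr rfl
      intro i _
      rw [Finset.mul_sum, Finset.mul_sum]
      apply Finset.sum_congr rfl
      intro j _
      rw [← hexp i j]
      have h2π : Real.sqrt (2 * π) ≠ 0 := by positivity
      field_simp
    have hz0 : ∃ z, g z ≠ 0 := by
      by_contra hall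
      push_neg at hall
      apply hc
      have key : (fun j => c j * d j) = 0 := by
        apply exp_comb_zeros n w hw _ (fun i : Fin n => (i.1 : ℝ))
          (fun i j hij => by simpa using (Nat.cast_lt (α := ℝ)).2 hij)
        intro i
        have h1 : ∀ z : ℝ, ∑ j, (c j * d j) * Real.exp (w j * z)
            = g z * Real.exp (z^2/4) := by
          intro z
          rw [hg, Finset.sum_mul]
          apply Finset.sum_congr rfl
          intro j _
          have hcan : φ j z * Real.exp (z^2/4) = Real.exp (w j * z) := by
            rw [hφ, ← Real.exp_add]
            congr 1
            ring
          conv_rhs => rw [mul_assoc, hcan]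
        rw [h1, hall, zero_mul]
      ext i
      have := congrFun key i
      simp only [Pi.zero_apply] at this ⊢
      rcases mul_eq_zero.1 this with h' | h'
      · exact h'
      · exact absurd h' (Real.exp_ne_zero _)
    obtain ⟨z₀, hz₀⟩ := hz0
    have hgc : Continuous g := by
      rw [hg]
      apply continuous_finset_sum
      intro i _
      apply Continuous.mul continuous_const
      rw [hφ]
      fun_prop
    have hpos : 0 < ∫ z, g z * g z := by
      rw [integral_pos_iff_support_of_nonneg (fun z => mul_self_nonneg (g z)) hgint]
      have hsupp : Function.support (fun z => g z * g z) = Function.support g := by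
        ext z
        simp [Function.mem_support, mul_self_eq_zero]
      rw [hsupp]
      exact (hgc.isOpen_support).measure_pos volume ⟨z₀, hz₀⟩
    rw [hQF]
    exact mul_pos (by positivity) hpos

lemma strictMono_convex {n : ℕ} {u v : Fin n → ℝ} (hu : StrictMono u) (hv : StrictMono v)
    {θ : ℝ} (h0 : 0 ≤ θ) (h1 : θ ≤ 1) : StrictMono (fun i => (1 - θ) * u i + θ * v i) := by
  intro i j hij
  have h2 := hu hij
  have h3 := hv hij
  simp only
  rcases eq_or_lt_of_le h0 with h | h
  · rw [← h]
    simpa using h2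
  · have e1 : (1 - θ) * u i ≤ (1 - θ) * u j := mul_le_mul_of_nonneg_left h2.le (by linarith)
    have e2 : θ * v i < θ * v j := (mul_lt_mul_iff_right₀ h).2 h3
    linarith

lemma det_exp_pos {n : ℕ} (u v : Fin n → ℝ) (hu : StrictMono u) (hv : StrictMono v) :
    0 < Matrix.det (Matrix.of fun i j => Real.exp (u i * v j)) := by
  let F : ℝ → ℝ := fun θ => Matrix.det (Matrix.of fun i j =>
    Real.exp (((1 - θ) * u i + θ * v i) * v j))
  have hcont : Continuous F := by
    apply Continuous.matrix_det
    apply continuous_matrix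
    intro i j
    simp only [Matrix.of_apply]
    fun_prop
  have hne : ∀ θ ∈ Set.Icc (0:ℝ) 1, F θ ≠ 0 := fun θ hθ =>
    det_exp_ne_zero _ v (strictMono_convex hu hv hθ.1 hθ.2) hv
  have hF1 : 0 < F 1 := by
    have h1 : (Matrix.of fun i j => Real.exp (((1 - (1:ℝ)) * u i + 1 * v i) * v j))
        = (Matrix.of fun i j => Real.exp (v i * v j)) := by
      ext i j
      norm_num
    show 0 < Matrix.det _
    rw [h1]
    exact det_exp_diag_pos v hv
  have hF0 : F 0 = Matrix.det (Matrix.of fun i j => Real.exp (u i * v j)) := by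
    have h1 : (Matrix.of fun i j => Real.exp (((1 - (0:ℝ)) * u i + 0 * v i) * v j))
        = (Matrix.of fun i j => Real.exp (u i * v j)) := by
      ext i j
      norm_num
    show Matrix.det _ = _
    rw [h1]
  rw [← hF0]
  rcases lt_trichotomy (F 0) 0 with hlt | heq | hgt
  · exfalso
    have hmem : (0:ℝ) ∈ Set.Icc (F 0) (F 1) := ⟨le_of_lt hlt, le_of_lt hF1⟩
    obtain ⟨θ, hθ, hFθ⟩ := intermediate_value_Icc zero_le_one hcont.continuousOn hmem
    exact hne θ hθ hFθ
  · exact absurd heq (hne 0 ⟨le_refl 0, zero_le_one⟩)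
  · exact hgt

lemma fKM_pos {N : ℕ} {t : ℝ} (ht : 0 < t) {x y : Fin N → ℝ}
    (hx : StrictMono x) (hy : StrictMono y) : 0 < fKM N t x y := by
  have hyt : StrictMono (fun j => y j / t) := fun i j h => (div_lt_div_iff_of_pos_right ht).2 (hy h)
  have hfac : ∀ (xi yj : ℝ), heatKernel t xi yj
      = ((1 / Real.sqrt (2*π*t)) * Real.exp (-xi^2/(2*t))) * Real.exp (xi * (yj / t))
        * Real.exp (-yj^2/(2*t)) := by
    intro xi yj
    unfold heatKernel
    conv_rhs => rw [mul_assoc, mul_assoc, ← Real.exp_add, ← Real.exp_add]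
    congr 1
    field_simp
    ring
  unfold fKM
  have hmat : (Matrix.of fun i j => heatKernel t (x i) (y j))
      = Matrix.diagonal (fun i => (1 / Real.sqrt (2*π*t)) * Real.exp (-(x i)^2/(2*t)))
        * (Matrix.of fun i j => Real.exp (x i * (y j / t)))
        * Matrix.diagonal (fun j => Real.exp (-(y j)^2/(2*t))) := by
    ext i j
    rw [Matrix.mul_diagonal, Matrix.diagonal_mul, Matrix.of_apply, Matrix.of_apply]
    exact hfac (x i) (y j)
  rw [hmat, Matrix.det_mul, Matrix.det_mul, Matrix.det_diagonal, Matrix.det_diagonal]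
  apply mul_pos (mul_pos _ (det_exp_pos x _ hx hyt))
  · exact Finset.prod_pos fun j _ => Real.exp_pos _
  · exact Finset.prod_pos fun i _ => by positivity

lemma fKM_expand (N : ℕ) (t : ℝ) (x y : Fin N → ℝ) :
    fKM N t x y = ∑ σ : Equiv.Perm (Fin N), psign σ * ∏ i, heatKernel t (x (σ i)) (y i) := by
  rw [fKM, Matrix.det_apply']
  rfl

lemma weylChamber_eq (N : ℕ) : weylChamber N
    = ⋂ p : {p : Fin N × Fin N // p.1 < p.2}, {x : Fin N → ℝ | x p.1.1 < x p.1.2} := by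
  ext x
  simp only [weylChamber, Set.mem_iInter, Set.mem_setOf_eq]
  constructor
  · intro h p
    exact h p.2
  · intro h i j hij
    exact h ⟨(i, j), hij⟩

lemma isOpen_weylChamber (N : ℕ) : IsOpen (weylChamber N) := by
  rw [weylChamber_eq]
  exact isOpen_iInter_of_finite fun p =>
    isOpen_lt (continuous_apply _) (continuous_apply _)

lemma measurableSet_weylChamber (N : ℕ) : MeasurableSet (weylChamber N) :=
  (isOpen_weylChamber N).measurableSet

lemma integrable_fKM {N : ℕ} {t : ℝ} (ht : 0 < t) (x : Fin N → ℝ) :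
    Integrable (fun y => fKM N t x y) := by
  simp_rw [fKM_expand N t x]
  apply integrable_finset_sum
  intro σ _
  exact (Integrable.fintype_prod (f := fun i => heatKernel t (x (σ i)))
    fun i => integrable_heatKernel ht _).const_mul _

lemma NKM_pos {N : ℕ} {t : ℝ} (ht : 0 < t) {x : Fin N → ℝ} (hx : x ∈ weylChamber N) :
    0 < NKM N t x := by
  rw [NKM, setIntegral_pos_iff_support_of_nonneg_ae]
  · apply lt_of_lt_of_le ((isOpen_weylChamber N).measure_pos volume ⟨x, hx⟩)
    apply measure_mono
    intro y hy
    exact ⟨ne_of_gt (fKM_pos ht hx hy), hy⟩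
  · rw [Filter.EventuallyLE, ae_restrict_iff' (measurableSet_weylChamber N)]
    exact ae_of_all _ fun y hy => (fKM_pos ht hx hy).le
  · exact (integrable_fKM ht x).integrableOn

lemma volume_noninj (N : ℕ) :
    volume {y : Fin N → ℝ | ¬ Function.Injective y} = 0 := by
  have hsub : {y : Fin N → ℝ | ¬ Function.Injective y}
      ⊆ ⋃ (p : Fin N × Fin N) (_ : p.1 ≠ p.2), {y : Fin N → ℝ | y p.1 = y p.2} := by
    intro y hy
    simp only [Set.mem_setOf_eq, Function.Injective, not_forall] at hy
    obtain ⟨i, j, hij, hne⟩ := hy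
    exact Set.mem_iUnion.2 ⟨(i, j), Set.mem_iUnion.2 ⟨hne, hij⟩⟩
  apply measure_mono_null hsub
  apply measure_iUnion_null
  intro p
  apply measure_iUnion_null
  intro hp
  have heq : {y : Fin N → ℝ | y p.1 = y p.2}
      = (LinearMap.ker ((LinearMap.proj p.1 : (Fin N → ℝ) →ₗ[ℝ] ℝ)
        - LinearMap.proj p.2) : Set (Fin N → ℝ)) := by
    ext y
    simp [LinearMap.mem_ker, sub_eq_zero]
  rw [heq]
  apply Measure.addHaar_submodule
  intro htop
  have hmem : (Pi.single p.1 1 : Fin N → ℝ) ∈ LinearMap.ker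
      ((LinearMap.proj p.1 : (Fin N → ℝ) →ₗ[ℝ] ℝ) - LinearMap.proj p.2) := by
    rw [htop]
    trivial
  simp only [LinearMap.mem_ker, LinearMap.sub_apply, LinearMap.proj_apply] at hmem
  rw [Pi.single_eq_same, Pi.single_eq_of_ne (Ne.symm hp), sub_zero] at hmem
  exact one_ne_zero hmem

lemma exists_sort {N : ℕ} (y : Fin N → ℝ) (hy : Function.Injective y) :
    ∃ σ : Equiv.Perm (Fin N), StrictMono (y ∘ σ) :=
  ⟨Tuple.sort y, (Tuple.monotone_sort y).strictMono_of_injective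
    (hy.comp (Tuple.sort y).injective)⟩

lemma sort_unique {N : ℕ} {y : Fin N → ℝ} {σ τ : Equiv.Perm (Fin N)}
    (hσ : StrictMono (y ∘ σ)) (hτ : StrictMono (y ∘ τ)) : σ = τ := by
  have hinjy : Function.Injective y := by
    intro a b hab
    have h2 : (y ∘ σ) (σ.symm a) = (y ∘ σ) (σ.symm b) := by simpa using hab
    simpa using congrArg σ (hσ.injective h2)
  have heq : y ∘ σ = y ∘ τ := Tuple.unique_monotone hσ.monotone hτ.monotone
  apply Equiv.ext
  intro i
  exact hinjy (congrFun heq i)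

noncomputable def permEquiv {N : ℕ} (σ : Equiv.Perm (Fin N)) :
    (Fin N → ℝ) ≃ᵐ (Fin N → ℝ) :=
  MeasurableEquiv.arrowCongr' σ.symm (MeasurableEquiv.refl ℝ)

lemma permEquiv_coe {N : ℕ} (σ : Equiv.Perm (Fin N)) :
    ⇑(permEquiv σ) = fun y : Fin N → ℝ => y ∘ σ := by
  funext y
  rfl

lemma perm_measurePreserving {N : ℕ} (σ : Equiv.Perm (Fin N)) :
    MeasurePreserving (fun y : Fin N → ℝ => y ∘ σ) volume volume := by
  have h := volume_preserving_arrowCongr' (β₁ := ℝ) σ.symm (MeasurableEquiv.refl ℝ)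
    (MeasurePreserving.id volume)
  rwa [show ⇑(MeasurableEquiv.arrowCongr' σ.symm (MeasurableEquiv.refl ℝ))
    = fun y : Fin N → ℝ => y ∘ σ from permEquiv_coe σ] at h

lemma integral_symmetric {N : ℕ} (G : (Fin N → ℝ) → ℝ)
    (hsym : ∀ σ : Equiv.Perm (Fin N), ∀ y, G (y ∘ σ) = G y)
    (hG : Integrable G) :
    ∫ y, G y = (Nat.factorial N : ℝ) * ∫ y in weylChamber N, G y := by
  classical
  set A : Equiv.Perm (Fin N) → Set (Fin N → ℝ) :=
    fun σ => (fun y => y ∘ σ) ⁻¹' weylChamber N with hA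
  have hmeasA : ∀ σ, MeasurableSet (A σ) := fun σ =>
    (measurableSet_weylChamber N).preimage (perm_measurePreserving σ).measurable
  have hdisj : Pairwise (Function.onFun Disjoint A) := by
    intro σ τ hne
    rw [Function.onFun, Set.disjoint_left]
    intro y hyσ hyτ
    exact hne (sort_unique hyσ hyτ)
  have hae : (⋃ σ, A σ) =ᵐ[volume] Set.univ := by
    rw [ae_eq_univ]
    apply measure_mono_null _ (volume_noninj N)
    intro y hy
    simp only [Set.mem_compl_iff, Set.mem_iUnion, not_exists] at hy
    simp only [Set.mem_setOf_eq]
    intro hinj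
    obtain ⟨σ, hσ⟩ := exists_sort y hinj
    exact hy σ hσ
  have h1 : ∫ y, G y = ∫ y in ⋃ σ, A σ, G y := by
    rw [← setIntegral_univ]
    exact (setIntegral_congr_set hae).symm
  have h2 : ∫ y in ⋃ σ, A σ, G y = ∑' σ, ∫ y in A σ, G y :=
    integral_iUnion hmeasA hdisj hG.integrableOn
  have h3 : ∀ σ, ∫ y in A σ, G y = ∫ y in weylChamber N, G y := by
    intro σ
    have hemb : MeasurableEmbedding (fun y : Fin N → ℝ => y ∘ σ) := by
      rw [← permEquiv_coe σ]
      exact (permEquiv σ).measurableEmbedding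
    have key := (perm_measurePreserving σ).setIntegral_preimage_emb hemb G (weylChamber N)
    rw [← key]
    apply setIntegral_congr_fun (hmeasA σ)
    intro y _
    exact (hsym σ y).symm
  rw [h1, h2, tsum_fintype]
  simp_rw [h3]
  rw [Finset.sum_const, Finset.card_univ, Fintype.card_perm]
  simp [nsmul_eq_mul]

lemma psign_mul {N : ℕ} (σ τ : Equiv.Perm (Fin N)) : psign (σ * τ) = psign σ * psign τ := by
  unfold psign
  rw [Equiv.Perm.sign_mul]
  push_cast
  ring

lemma psign_inv {N : ℕ} (σ : Equiv.Perm (Fin N)) : psign σ⁻¹ = psign σ := by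
  unfold psign
  rw [Equiv.Perm.sign_inv]

lemma psign_sq {N : ℕ} (σ : Equiv.Perm (Fin N)) : psign σ * psign σ = 1 := by
  unfold psign
  rw [← Int.cast_mul, ← Units.val_mul, Int.units_mul_self]
  norm_num

lemma fKM_expand_col (N : ℕ) (t : ℝ) (x y : Fin N → ℝ) :
    fKM N t x y = ∑ σ : Equiv.Perm (Fin N), psign σ * ∏ i, heatKernel t (x i) (y (σ i)) := by
  rw [fKM, ← Matrix.det_transpose, Matrix.det_apply']
  rfl

/-- Expansion of the product of two KM determinants as a double sum of product terms. -/
lemma fKM_mul_expand {N : ℕ} (a b : ℝ) (x w : Fin N → ℝ) :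
    (fun y : Fin N → ℝ => fKM N a x y * fKM N b y w)
      = fun y => ∑ σ : Equiv.Perm (Fin N), ∑ τ : Equiv.Perm (Fin N),
        (psign σ * psign τ) *
          ∏ i, (heatKernel a (x (σ i)) (y i) * heatKernel b (y i) (w (τ⁻¹ i))) := by
  funext y
  rw [fKM_expand N a x y, fKM_expand N b y w, Finset.sum_mul_sum]
  apply Finset.sum_congr rfl
  intro σ _
  apply Finset.sum_congr rfl
  intro τ _
  have hre : ∏ j, heatKernel b (y (τ j)) (w j)
      = ∏ i, heatKernel b (y i) (w (τ⁻¹ i)) := by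
    rw [← Equiv.prod_comp τ (fun i => heatKernel b (y i) (w (τ⁻¹ i)))]
    apply Finset.prod_congr rfl
    intro j _
    simp
  rw [hre, Finset.prod_mul_distrib]
  ring

lemma integrable_fKM_mul {N : ℕ} {a b : ℝ} (ha : 0 < a) (hb : 0 < b)
    (x w : Fin N → ℝ) : Integrable (fun y : Fin N → ℝ => fKM N a x y * fKM N b y w) := by
  rw [fKM_mul_expand]
  apply integrable_finset_sum
  intro σ _
  apply integrable_finset_sum
  intro τ _
  exact (Integrable.fintype_prod
    (f := fun i z => heatKernel a (x (σ i)) z * heatKernel b z (w (τ⁻¹ i)))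
    fun i => integrable_heatKernel_mul ha hb _ _).const_mul _

lemma fKM_symm {N : ℕ} (a b : ℝ) (x w : Fin N → ℝ) (σ : Equiv.Perm (Fin N))
    (y : Fin N → ℝ) :
    fKM N a x (y ∘ σ) * fKM N b (y ∘ σ) w = fKM N a x y * fKM N b y w := by
  have h1 : fKM N a x (y ∘ σ) = psign σ * fKM N a x y := by
    have : (Matrix.of fun i j => heatKernel a (x i) ((y ∘ σ) j))
        = (Matrix.of fun i j => heatKernel a (x i) (y j)).submatrix id σ := rfl
    rw [fKM, this, Matrix.det_permute', fKM]
    rfl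
  have h2 : fKM N b (y ∘ σ) w = psign σ * fKM N b y w := by
    have : (Matrix.of fun i j => heatKernel b ((y ∘ σ) i) (w j))
        = (Matrix.of fun i j => heatKernel b (y i) (w j)).submatrix σ id := rfl
    rw [fKM, this, Matrix.det_permute, fKM]
    rfl
  rw [h1, h2]
  calc psign σ * fKM N a x y * (psign σ * fKM N b y w)
      = (psign σ * psign σ) * (fKM N a x y * fKM N b y w) := by ring
    _ = fKM N a x y * fKM N b y w := by rw [psign_sq, one_mul]

set_option maxHeartbeats 1000000 in
lemma integral_fKM_mul_full {N : ℕ} {a b : ℝ} (ha : 0 < a) (hb : 0 < b)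
    (x w : Fin N → ℝ) :
    ∫ y : Fin N → ℝ, fKM N a x y * fKM N b y w
      = (Nat.factorial N : ℝ) * fKM N (a + b) x w := by
  have hint : ∀ σ τ : Equiv.Perm (Fin N), Integrable (fun y : Fin N → ℝ =>
      (psign σ * psign τ) *
        ∏ i, (heatKernel a (x (σ i)) (y i) * heatKernel b (y i) (w (τ⁻¹ i)))) :=
    fun σ τ => (Integrable.fintype_prod
      (f := fun i z => heatKernel a (x (σ i)) z * heatKernel b z (w (τ⁻¹ i)))
      fun i => integrable_heatKernel_mul ha hb _ _).const_mul _
  rw [fKM_mul_expand]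
  rw [integral_finset_sum _ (fun σ _ => integrable_finset_sum _ (fun τ _ => hint σ τ))]
  have hstep : ∀ σ : Equiv.Perm (Fin N),
      (∫ y : Fin N → ℝ, ∑ τ : Equiv.Perm (Fin N), (psign σ * psign τ) *
        ∏ i, (heatKernel a (x (σ i)) (y i) * heatKernel b (y i) (w (τ⁻¹ i))))
      = ∑ ρ : Equiv.Perm (Fin N), psign ρ * ∏ k, heatKernel (a + b) (x k) (w (ρ k)) := by
    intro σ
    rw [integral_finset_sum _ (fun τ _ => hint σ τ)]
    have hterm : ∀ τ : Equiv.Perm (Fin N),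
        (∫ y : Fin N → ℝ, (psign σ * psign τ) *
          ∏ i, (heatKernel a (x (σ i)) (y i) * heatKernel b (y i) (w (τ⁻¹ i))))
        = (psign σ * psign τ) * ∏ i, heatKernel (a + b) (x (σ i)) (w (τ⁻¹ i)) := by
      intro τ
      rw [integral_const_mul]
      congr 1
      rw [MeasureTheory.integral_fintype_prod_volume_eq_prod
        (f := fun i z => heatKernel a (x (σ i)) z * heatKernel b z (w (τ⁻¹ i)))]
      exact Finset.prod_congr rfl fun i _ => heatKernel_chapman ha hb _ _
    simp_rw [hterm]
    -- reindex τ ↦ (σ * τ)⁻¹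
    have hbij : Function.Bijective (fun τ : Equiv.Perm (Fin N) => (σ * τ)⁻¹) := by
      constructor
      · intro τ₁ τ₂ h
        simp only at h
        exact mul_left_cancel (inv_injective h)
      · intro ρ
        exact ⟨σ⁻¹ * ρ⁻¹, by group⟩
    apply Fintype.sum_bijective _ hbij
    intro τ
    have hsign : psign σ * psign τ = psign ((σ * τ)⁻¹) := by
        rw [psign_inv, psign_mul]
    have hprod : ∏ i, heatKernel (a + b) (x (σ i)) (w (τ⁻¹ i))
        = ∏ k, heatKernel (a + b) (x k) (w ((σ * τ)⁻¹ k)) := by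
      rw [← Equiv.prod_comp σ (fun k => heatKernel (a + b) (x k) (w ((σ * τ)⁻¹ k)))]
      apply Finset.prod_congr rfl
      intro i _
      congr 2
      rw [_root_.mul_inv_rev]
      simp [Equiv.Perm.mul_apply]
    rw [hsign, hprod]
  simp_rw [hstep]
  rw [Finset.sum_const, Finset.card_univ, Fintype.card_perm, Fintype.card_fin, nsmul_eq_mul]
  congr 1
  rw [fKM_expand_col]

lemma fKM_semigroup {N : ℕ} {a b : ℝ} (ha : 0 < a) (hb : 0 < b) (x w : Fin N → ℝ) :
    ∫ y in weylChamber N, fKM N a x y * fKM N b y w = fKM N (a + b) x w := by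
  have h1 := integral_symmetric (fun y => fKM N a x y * fKM N b y w)
    (fun σ y => fKM_symm a b x w σ y) (integrable_fKM_mul ha hb x w)
  rw [integral_fKM_mul_full ha hb x w] at h1
  have hfac : (Nat.factorial N : ℝ) ≠ 0 := Nat.cast_ne_zero.2 (Nat.factorial_ne_zero N)
  field_simp at h1
  exact h1.symm

lemma continuous_heatKernel2 (t : ℝ) : Continuous (fun q : ℝ × ℝ => heatKernel t q.1 q.2) := by
  unfold heatKernel
  fun_prop

set_option maxHeartbeats 1600000 in
/-- Each term of the double-determinant expansion is integrable on the product space. -/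
lemma integrable_term_prod {N : ℕ} {a b : ℝ} (ha : 0 < a) (hb : 0 < b)
    (x : Fin N → ℝ) (σ τ : Equiv.Perm (Fin N)) :
    Integrable (fun p : (Fin N → ℝ) × (Fin N → ℝ) =>
      (psign σ * psign τ) *
        ∏ i, (heatKernel a (x (σ i)) (p.2 i) * heatKernel b (p.2 i) (p.1 (τ⁻¹ i))))
      (volume.prod volume) := by
  set C := psign σ * psign τ with hC
  have hcont : Continuous (fun p : (Fin N → ℝ) × (Fin N → ℝ) =>
      C * ∏ i, (heatKernel a (x (σ i)) (p.2 i) * heatKernel b (p.2 i) (p.1 (τ⁻¹ i)))) := by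
    unfold heatKernel
    fun_prop
  rw [integrable_prod_iff hcont.aestronglyMeasurable]
  constructor
  · apply ae_of_all
    intro w
    exact (Integrable.fintype_prod
      (f := fun i z => heatKernel a (x (σ i)) z * heatKernel b z (w (τ⁻¹ i)))
      fun i => integrable_heatKernel_mul ha hb _ _).const_mul _
  · have hnorm : (fun w : Fin N → ℝ => ∫ y : Fin N → ℝ,
        ‖C * ∏ i, (heatKernel a (x (σ i)) (y i) * heatKernel b (y i) (w (τ⁻¹ i)))‖)
        = fun w => |C| * ∏ k, heatKernel (a + b) (x (σ (τ k))) (w k) := by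
      funext w
      have h1 : ∀ y : Fin N → ℝ,
          ‖C * ∏ i, (heatKernel a (x (σ i)) (y i) * heatKernel b (y i) (w (τ⁻¹ i)))‖
          = |C| * ∏ i, (heatKernel a (x (σ i)) (y i) * heatKernel b (y i) (w (τ⁻¹ i))) := by
        intro y
        rw [Real.norm_eq_abs, abs_mul]
        congr 1
        apply abs_of_nonneg
        exact Finset.prod_nonneg fun i _ =>
          mul_nonneg (heatKernel_pos ha _ _).le (heatKernel_pos hb _ _).le
      simp_rw [h1]
      rw [integral_const_mul]
      congr 1
      rw [MeasureTheory.integral_fintype_prod_volume_eq_prod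
        (f := fun i z => heatKernel a (x (σ i)) z * heatKernel b z (w (τ⁻¹ i)))]
      rw [← Equiv.prod_comp τ
        (fun i => ∫ z, heatKernel a (x (σ i)) z * heatKernel b z (w (τ⁻¹ i)))]
      apply Finset.prod_congr rfl
      intro k _
      rw [heatKernel_chapman ha hb]
      congr 1
      simp
    rw [hnorm]
    exact (Integrable.fintype_prod (f := fun k z => heatKernel (a + b) (x (σ (τ k))) z)
      fun k => integrable_heatKernel (by linarith) _).const_mul _

lemma integrable_fKM_prod {N : ℕ} {a b : ℝ} (ha : 0 < a) (hb : 0 < b) (x : Fin N → ℝ) :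
    Integrable (fun p : (Fin N → ℝ) × (Fin N → ℝ) => fKM N a x p.2 * fKM N b p.2 p.1)
      (volume.prod volume) := by
  have heq : (fun p : (Fin N → ℝ) × (Fin N → ℝ) => fKM N a x p.2 * fKM N b p.2 p.1)
      = fun p => ∑ σ : Equiv.Perm (Fin N), ∑ τ : Equiv.Perm (Fin N),
        (psign σ * psign τ) *
          ∏ i, (heatKernel a (x (σ i)) (p.2 i) * heatKernel b (p.2 i) (p.1 (τ⁻¹ i))) := by
    funext p
    exact congrFun (fKM_mul_expand a b x p.1) p.2
  rw [heq]
  exact integrable_finset_sum _ fun σ _ => integrable_finset_sum _ fun τ _ =>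
    integrable_term_prod ha hb x σ τ

lemma integral_swap_chamber {N : ℕ} {a b : ℝ} (ha : 0 < a) (hb : 0 < b) (x : Fin N → ℝ) :
    ∫ w in weylChamber N, ∫ y in weylChamber N, fKM N a x y * fKM N b y w
      = ∫ y in weylChamber N, ∫ w in weylChamber N, fKM N a x y * fKM N b y w := by
  apply integral_integral_swap
  apply Integrable.mono_measure (integrable_fKM_prod ha hb x)
  rw [Measure.prod_restrict]
  exact Measure.restrict_le_self

/-- The transition probability density `g_{N,T}(s, x; t, y)` of the non-colliding system
integrates to one over the Weyl chamber. -/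
theorem transitionDensity_integral_one (N : ℕ) (T s t : ℝ) (hs : 0 < s) (hst : s < t)
    (htT : t < T) (x : Fin N → ℝ) (hx : x ∈ weylChamber N) :
    ∫ y in weylChamber N, fKM N (t - s) x y * NKM N (T - t) y / NKM N (T - s) x = 1 := by
  have ha : 0 < t - s := by linarith
  have hb : 0 < T - t := by linarith
  have hD : 0 < NKM N (T - s) x := NKM_pos (by linarith) hx
  have hkey : ∫ y in weylChamber N, fKM N (t - s) x y * NKM N (T - t) y
      = NKM N (T - s) x := by
    have h1 : ∀ y, fKM N (t - s) x y * NKM N (T - t) y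
        = ∫ w in weylChamber N, fKM N (t - s) x y * fKM N (T - t) y w := by
      intro y
      rw [NKM, ← integral_const_mul]
    simp_rw [h1]
    rw [← integral_swap_chamber ha hb x]
    have h2 : ∀ w, (∫ y in weylChamber N, fKM N (t - s) x y * fKM N (T - t) y w)
        = fKM N (T - s) x w := by
      intro w
      have h3 := fKM_semigroup ha hb x w
      rw [show t - s + (T - t) = T - s by ring] at h3
      exact h3
    simp_rw [h2]
    rfl
  simp_rw [div_eq_mul_inv]
  rw [integral_mul_const, hkey, mul_inv_cancel₀ hD.ne']
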